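/- Let h be a unit vector in H and S = (l(h) + l(h)*)/2 on the full Fock space, and let ω be the vacuum state ω(T) = ⟨T1, 1⟩. Then ω(S^n) equals the n-th moment of the standard semicircular law μ_{0,1}: ω(S^{2k}) = C_k/4^k (C_k the Catalan number) and ω(S^{2k+1}) = 0. -/

import Mathlib

open scoped InnerProductSpace ComplexConjugate

/-- A realization of the full Fock space `T(H) = ℂ1 ⊕ ⨁_{n≥1} H^{⊗n}` over a complex
Hilbert space `H`, on a Hilbert space `F`: `emb n ξ` is the elementary tensor
`ξ₀ ⊗ ⋯ ⊗ ξ_{n-1}` (with `emb 0` the vacuum vector `1`), elementary tensors have the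
prescribed inner products and total linear span dense in `F`, and `l h` is the left
creation operator `ξ ↦ h ⊗ ξ`. -/
structure FullFock (H : Type*) [NormedAddCommGroup H] [InnerProductSpace ℂ H]
    (F : Type*) [NormedAddCommGroup F] [InnerProductSpace ℂ F] [CompleteSpace F] where
  emb : ∀ n : ℕ, (Fin n → H) → F
  inner_emb : ∀ (m n : ℕ) (ξ : Fin m → H) (η : Fin n → H),
    ⟪emb m ξ, emb n η⟫_ℂ =
      if h : m = n then ∏ i : Fin m, ⟪ξ i, η (Fin.cast h i)⟫_ℂ else 0
  dense_span :
    (Submodule.span ℂ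
        (Set.range fun p : Σ n : ℕ, (Fin n → H) => emb p.1 p.2)).topologicalClosure = ⊤
  l : H → F →L[ℂ] F
  l_emb : ∀ (h : H) (n : ℕ) (ξ : Fin n → H),
    l h (emb n ξ) = emb (n + 1) (Fin.cons h ξ)

/-- The vacuum vector of a full Fock space. -/
def FullFock.vacuum {H : Type*} [NormedAddCommGroup H] [InnerProductSpace ℂ H]
    {F : Type*} [NormedAddCommGroup F] [InnerProductSpace ℂ F] [CompleteSpace F]
    (T : FullFock H F) : F :=
  T.emb 0 (fun i => i.elim0)


/-- Ballot numbers: number of ±1-paths of length `m + 2*j` from 0 to `m` staying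
nonnegative, as a rational number: `C(m+2j, j) - C(m+2j, j-1)`. -/
def bb (j m : ℕ) : ℚ :=
  ((m + 2 * j).choose j : ℚ) - if j = 0 then 0 else ((m + 2 * j).choose (j - 1) : ℚ)

lemma bb_zero (m : ℕ) : bb 0 m = 1 := by simp [bb]

lemma bb_succ_zero (j : ℕ) : bb (j + 1) 0 = bb j 1 := by
  rcases j with _ | i
  · norm_num [bb]
  · set j := i + 1
    have h1 : (0 + 2 * (j + 1)) = (2 * j + 1) + 1 := by omega
    have h2 : (1 + 2 * j) = 2 * j + 1 := by omega
    have p1 : ((2 * j + 1) + 1).choose (j + 1)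
        = (2 * j + 1).choose j + (2 * j + 1).choose (j + 1) := Nat.choose_succ_succ _ _
    have p2 : ((2 * j + 1) + 1).choose (i + 1)
        = (2 * j + 1).choose i + (2 * j + 1).choose (i + 1) := Nat.choose_succ_succ _ _
    have hsymm : (2 * j + 1).choose (j + 1) = (2 * j + 1).choose j := by
      have := Nat.choose_symm (n := 2 * j + 1) (k := j + 1) (by omega)
      have hji : 2 * j + 1 - (j + 1) = j := by omega
      rw [hji] at this
      exact this.symm
    simp only [bb, h1, h2]
    have : j + 1 - 1 = j := rfl
    rw [this, p1]
    have : j ≠ 0 := by omega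
    simp only [if_neg (by omega : j + 1 ≠ 0), if_neg this]
    have : j - 1 = i := by omega
    rw [this, p2, hsymm]
    push_cast
    have : (2 * j + 1).choose (i + 1) = (2 * j + 1).choose j := by norm_num [j]
    rw [this]
    ring

lemma bb_rec (j m : ℕ) : bb (j + 1) (m + 1) = bb j (m + 2) + bb (j + 1) m := by
  have h1 : (m + 1) + 2 * (j + 1) = (m + 2 * j + 2) + 1 := by omega
  have h2 : (m + 2) + 2 * j = m + 2 * j + 2 := by omega
  have h3 : m + 2 * (j + 1) = m + 2 * j + 2 := by omega
  set N := m + 2 * j + 2 with hN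
  have p1 : (N + 1).choose (j + 1) = N.choose j + N.choose (j + 1) := Nat.choose_succ_succ _ _
  simp only [bb, h1, h2, h3, if_neg (by omega : j + 1 ≠ 0), Nat.add_sub_cancel, p1]
  rcases j with _ | i
  · simp only [if_pos rfl, Nat.choose_zero_right]
    push_cast
    ring
  · have p2 : (N + 1).choose (i + 1) = N.choose i + N.choose (i + 1) := Nat.choose_succ_succ _ _
    simp only [if_neg (by omega : i + 1 ≠ 0), Nat.add_sub_cancel, p2]
    push_cast
    ring

lemma bb_zero_right (k : ℕ) : bb k 0 = (catalan k : ℚ) := by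
  rcases k with _ | i
  · simp [bb]
  · have key : (2 * (i + 1)).choose (i + 1) * (i + 1) = (2 * (i + 1)).choose i * (i + 2) := by
      have h := Nat.choose_succ_right_eq (2 * (i + 1)) i
      have h' : 2 * (i + 1) - i = i + 2 := by omega
      rw [h'] at h
      exact h
    have hcb : (i + 1 + 1) * catalan (i + 1) = (i + 1).centralBinom :=
      succ_mul_catalan_eq_centralBinom (i + 1)
    have hcb' : (i + 1).centralBinom = (2 * (i + 1)).choose (i + 1) := rfl
    rw [hcb'] at hcb
    simp only [bb, if_neg (by omega : i + 1 ≠ 0), Nat.add_sub_cancel, zero_add]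
    have hA : ((2 * (i + 1)).choose (i + 1) : ℚ) = (i + 2) * (catalan (i + 1) : ℚ) := by
      have h0 : ((i : ℚ) + 1 + 1) * (catalan (i + 1) : ℚ)
          = ((2 * (i + 1)).choose (i + 1) : ℚ) := by exact_mod_cast hcb
      linarith
    have hB : ((2 * (i + 1)).choose i : ℚ) = (i + 1) * (catalan (i + 1) : ℚ) := by
      have hq : ((2 * (i + 1)).choose (i + 1) : ℚ) * (i + 1)
          = ((2 * (i + 1)).choose i : ℚ) * (i + 2) := by exact_mod_cast key
      rw [hA] at hq
      have h2 : ((i : ℚ) + 2) ≠ 0 := by positivity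
      exact mul_right_cancel₀ h2 (by linear_combination -hq)
    rw [hA, hB]; ring

/-- Coefficients of `S^n (e 0)` in the orthonormal basis `e m`. -/
def cseq : ℕ → ℕ → ℚ
  | 0, 0 => 1
  | 0, _ + 1 => 0
  | n + 1, m => (cseq n (m + 1) + if m = 0 then 0 else cseq n (m - 1)) / 2

lemma cseq_zero_zero : cseq 0 0 = 1 := rfl
lemma cseq_zero_succ (m : ℕ) : cseq 0 (m + 1) = 0 := rfl
lemma cseq_succ (n m : ℕ) :
    cseq (n + 1) m = (cseq n (m + 1) + if m = 0 then 0 else cseq n (m - 1)) / 2 := rfl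

lemma cseq_of_lt : ∀ n m, n < m → cseq n m = 0 := by
  intro n
  induction n with
  | zero => intro m hm; rcases m with _ | m; · omega
            · rfl
  | succ n ih =>
      intro m hm
      rw [cseq_succ, ih (m + 1) (by omega), if_neg (by omega : m ≠ 0),
        ih (m - 1) (by omega)]
      norm_num

lemma cseq_parity : ∀ n m, (n + m) % 2 = 1 → cseq n m = 0 := by
  intro n
  induction n with
  | zero => intro m hm; rcases m with _ | m; · omega
            · rfl
  | succ n ih =>
      intro m hm
      rw [cseq_succ, ih (m + 1) (by omega)]
      rcases m with _ | m'
      · norm_num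
      · rw [if_neg (by omega : m' + 1 ≠ 0), ih (m' + 1 - 1) (by omega)]
        norm_num

lemma cseq_eq : ∀ n j m, n = m + 2 * j → cseq n m = bb j m / 2 ^ n := by
  intro n
  induction n with
  | zero =>
      intro j m hjm
      have : j = 0 ∧ m = 0 := by omega
      obtain ⟨rfl, rfl⟩ := this
      simp [cseq_zero_zero, bb_zero]
  | succ n ih =>
      intro j m hjm
      rcases m with _ | m'
      · -- m = 0, so n + 1 = 2 j, j = i + 1
        obtain ⟨i, rfl⟩ : ∃ i, j = i + 1 := ⟨j - 1, by omega⟩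
        rw [cseq_succ, if_pos rfl, ih i 1 (by omega), bb_succ_zero]
        ring
      · rcases j with _ | i
        · -- j = 0, m = n + 1
          have hm : m' + 1 = n + 1 := by omega
          rw [cseq_succ, cseq_of_lt n (m' + 1 + 1) (by omega),
            if_neg (by omega : m' + 1 ≠ 0)]
          have : m' + 1 - 1 = m' := rfl
          rw [this, ih 0 m' (by omega), bb_zero, bb_zero]
          ring
        · rw [cseq_succ, if_neg (by omega : m' + 1 ≠ 0)]
          have : m' + 1 - 1 = m' := rfl
          rw [this, ih i (m' + 2) (by omega), ih (i + 1) m' (by omega), bb_rec i m']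
          ring

lemma cseq_even (k : ℕ) : cseq (2 * k) 0 = (catalan k : ℚ) / 4 ^ k := by
  rw [cseq_eq (2 * k) k 0 (by omega), bb_zero_right]
  congr 1
  rw [pow_mul]; norm_num

lemma cseq_odd (k : ℕ) : cseq (2 * k + 1) 0 = 0 := cseq_parity _ _ (by omega)

/-- For a unit vector `h`, the moments of `S = (l(h) + l(h)*)/2` in the vacuum state
`ω(T) = ⟨T1, 1⟩` are those of the standard semicircular law `μ_{0,1}`:
`ω(S^{2k}) = C_k / 4^k` (with `C_k` the `k`-th Catalan number) and `ω(S^{2k+1}) = 0`. -/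

theorem vacuum_moments_semicircular {H : Type*} [NormedAddCommGroup H]
    [InnerProductSpace ℂ H]
    {F : Type*} [NormedAddCommGroup F] [InnerProductSpace ℂ F] [CompleteSpace F]
    (T : FullFock H F) (h : H) (hh : ‖h‖ = 1)
    (S : F →L[ℂ] F)
    (hS : S = (2 : ℂ)⁻¹ • (T.l h + ContinuousLinearMap.adjoint (T.l h)))
    (ω : (F →L[ℂ] F) → ℂ) (hω : ∀ X : F →L[ℂ] F, ω X = ⟪X T.vacuum, T.vacuum⟫_ℂ) :
    ∀ k : ℕ, ω (S ^ (2 * k)) = (catalan k : ℂ) / 4 ^ k ∧ ω (S ^ (2 * k + 1)) = 0 := by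
  have hinner : ⟪h, h⟫_ℂ = 1 := by
    rw [inner_self_eq_norm_sq_to_K, hh]; norm_num
  set e : ℕ → F := fun n => T.emb n (fun _ => h) with he_def
  have hee : ∀ m n : ℕ, ⟪e m, e n⟫_ℂ = if m = n then 1 else 0 := by
    intro m n
    rw [he_def]
    simp only
    rw [T.inner_emb]
    split_ifs with hmn
    · subst hmn
      simp [hinner, hh]
    · rfl
  have hvac : T.vacuum = e 0 := by
    rw [he_def, FullFock.vacuum]
    congr 1
    funext i
    exact i.elim0
  have hle : ∀ n : ℕ, T.l h (e n) = e (n + 1) := by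
    intro n
    rw [he_def]
    simp only
    rw [T.l_emb]
    congr 1
    funext i
    induction i using Fin.cases <;> simp
  have hdense : ∀ v : F, (∀ (n : ℕ) (ξ : Fin n → H), ⟪T.emb n ξ, v⟫_ℂ = 0) → v = 0 := by
    intro v hv
    have hmem : v ∈ (Submodule.span ℂ
        (Set.range fun p : Σ n : ℕ, (Fin n → H) => T.emb p.1 p.2))ᗮ := by
      rw [Submodule.mem_orthogonal]
      intro u hu
      induction hu using Submodule.span_induction with
      | mem x hx => obtain ⟨⟨n, ξ⟩, rfl⟩ := hx; exact hv n ξ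
      | zero => simp
      | add x y _ _ hx hy => rw [inner_add_left, hx, hy, add_zero]
      | smul c x _ hx => rw [inner_smul_left, hx, mul_zero]
    have horth := T.dense_span
    rw [Submodule.topologicalClosure_eq_top_iff] at horth
    rw [horth] at hmem
    simpa using hmem
  have hadj0 : ContinuousLinearMap.adjoint (T.l h) (e 0) = 0 := by
    apply hdense
    intro n ξ
    rw [ContinuousLinearMap.adjoint_inner_right, T.l_emb, he_def]
    simp only
    rw [T.inner_emb]
    rw [dif_neg (by omega : n + 1 ≠ 0)]
  have hadjS : ∀ n : ℕ, ContinuousLinearMap.adjoint (T.l h) (e (n + 1)) = e n := by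
    intro n
    have key : ContinuousLinearMap.adjoint (T.l h) (e (n + 1)) - e n = 0 := by
      apply hdense
      intro m ξ
      rw [inner_sub_right, ContinuousLinearMap.adjoint_inner_right, T.l_emb, he_def]
      simp only
      rw [T.inner_emb, T.inner_emb]
      by_cases hmn : m = n
      · subst hmn
        rw [dif_pos rfl, dif_pos rfl]
        rw [Fin.prod_univ_succ]
        simp [hinner, hh]
      · rw [dif_neg (by omega : m + 1 ≠ n + 1), dif_neg hmn, sub_zero]
    exact sub_eq_zero.mp key
  have hSA : ContinuousLinearMap.adjoint S = S := by
    rw [hS, map_smulₛₗ, map_add, ContinuousLinearMap.adjoint_adjoint]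
    have : (starRingEnd ℂ) (2 : ℂ)⁻¹ = (2 : ℂ)⁻¹ := by
      rw [map_inv₀, Complex.conj_ofNat]
    rw [this, add_comm]
  have hSe0 : S (e 0) = (2 : ℂ)⁻¹ • e 1 := by
    rw [hS]
    simp [hle 0, hadj0]
  have hSeS : ∀ n : ℕ, S (e (n + 1)) = (2 : ℂ)⁻¹ • (e (n + 2) + e n) := by
    intro n
    rw [hS]
    simp [hle (n + 1), hadjS n]
  have hswap : ∀ (x y : F), ⟪S x, y⟫_ℂ = ⟪x, S y⟫_ℂ := by
    intro x y
    conv_lhs => rw [← hSA]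
    rw [ContinuousLinearMap.adjoint_inner_left]
  have ha : ∀ n m : ℕ, ⟪(S ^ n) (e 0), e m⟫_ℂ = ((cseq n m : ℚ) : ℂ) := by
    intro n
    induction n with
    | zero =>
        intro m
        rw [pow_zero, ContinuousLinearMap.one_apply, hee]
        rcases m with _ | m'
        · rw [cseq_zero_zero]; norm_num
        · rw [cseq_zero_succ]; norm_num
    | succ n ih =>
        intro m
        have hp : (S ^ (n + 1)) (e 0) = S ((S ^ n) (e 0)) := by
          rw [pow_succ']
          rfl
        rw [hp, hswap]
        rcases m with _ | m'
        · rw [hSe0, inner_smul_right, ih 1, cseq_succ]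
          push_cast
          ring
        · rw [hSeS m', inner_smul_right, inner_add_right, ih (m' + 2), ih m', cseq_succ]
          rw [if_neg (by omega : m' + 1 ≠ 0)]
          have : m' + 1 - 1 = m' := rfl
          rw [this]
          push_cast
          ring
  intro k
  constructor
  · rw [hω, hvac, ha (2 * k) 0, cseq_even]
    push_cast
    ring
  · rw [hω, hvac, ha (2 * k + 1) 0, cseq_odd]
    norm_num
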